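/- arXiv:2203.10371 — 2 statements merged into one kernel-verified Lean document; each statement's English description precedes it below -/
import Mathlib

section
/- Let M be a connected smooth n-dimensional manifold and let S ⊆ M be a finite set of points. Then there exists a compact set B ⊆ M that is diffeomorphic to the closed unit ball in ℝⁿ and whose interior contains S. -/
open Metric
open scoped Manifold

noncomputable section

open Set Function
open scoped Topology NNReal ContDiff

set_option linter.unusedSectionVars false

section AuxiliaryEuclidean

variable {E : Type*} [NormedAddCommGroup E] [InnerProductSpace ℝ E] [FiniteDimensional ℝ E]

theorem hone : (∞ : WithTop ℕ∞) ≠ 0 := by exact_mod_cast (ENat.top_ne_zero : (⊤:ℕ∞) ≠ 0)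

/-- A small Lipschitz perturbation of the identity is a diffeomorphism. -/
theorem perturb_id {φ : E → ℝ} {K : ℝ≥0} (hφ : ContDiff ℝ ∞ φ) (hlip : LipschitzWith K φ)
    (c : E) (hc : (K : ℝ) * ‖c‖ < 1) :
    ∃ g : E → E, ContDiff ℝ ∞ g ∧ (∀ x, g (x + φ x • c) = x) ∧
      (∀ y, g y + φ (g y) • c = y) := by
  set f : E → E := fun x => x + φ x • c with hf_def
  have hf : ContDiff ℝ ∞ f := contDiff_id.add (hφ.smul contDiff_const)
  have hK' : ∀ x y : E, ‖φ x • c - φ y • c‖ ≤ (K : ℝ) * ‖c‖ * ‖x - y‖ := by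
    intro x y
    rw [← sub_smul, norm_smul, Real.norm_eq_abs]
    have := hlip.dist_le_mul x y
    rw [Real.dist_eq, dist_eq_norm] at this
    calc |φ x - φ y| * ‖c‖ ≤ ((K : ℝ) * ‖x - y‖) * ‖c‖ :=
          mul_le_mul_of_nonneg_right this (norm_nonneg c)
      _ = (K : ℝ) * ‖c‖ * ‖x - y‖ := by ring
  have hinj : Function.Injective f := by
    intro x y h
    by_contra hxy
    have hpos : 0 < ‖x - y‖ := by
      rw [norm_pos_iff, sub_ne_zero]; exact fun h' => hxy h'
    have h' : x + φ x • c = y + φ y • c := h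
    have h1 : x - y = φ y • c - φ x • c := by
      rw [sub_eq_sub_iff_add_eq_add, h']; exact add_comm _ _
    have h2 : ‖x - y‖ ≤ (K : ℝ) * ‖c‖ * ‖x - y‖ := by
      calc ‖x - y‖ = ‖φ y • c - φ x • c‖ := by rw [h1]
        _ ≤ (K : ℝ) * ‖c‖ * ‖y - x‖ := hK' y x
        _ = (K : ℝ) * ‖c‖ * ‖x - y‖ := by rw [norm_sub_rev]
    nlinarith
  have hKc1 : (K * ‖c‖₊ : ℝ≥0) < 1 := by
    rw [← NNReal.coe_lt_coe]; push_cast; simpa using hc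
  have hlipc : LipschitzWith (K * ‖c‖₊) (fun x : E => φ x • c) := by
    apply LipschitzWith.of_dist_le_mul
    intro x y
    rw [dist_eq_norm, dist_eq_norm]
    push_cast
    exact hK' x y
  have hcontr : ∀ y : E, ContractingWith (K * ‖c‖₊) (fun x => y - φ x • c) := fun y =>
    ⟨hKc1, LipschitzWith.of_dist_le_mul fun a b => by
      rw [dist_sub_left]; exact hlipc.dist_le_mul a b⟩
  set g : E → E := fun y => ContractingWith.fixedPoint _ (hcontr y) with hg_def
  have hgfix : ∀ y, g y = y - φ (g y) • c := fun y =>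
    ((hcontr y).fixedPoint_isFixedPt).symm
  have hright' : ∀ y, g y + φ (g y) • c = y := by
    intro y
    have h := hgfix y
    generalize hT : φ (g y) • c = T at h ⊢
    rw [h]; abel
  have hright : ∀ y, f (g y) = y := fun y => hright' y
  have hleft : ∀ x, g (f x) = x := fun x => hinj (hright (f x))
  refine ⟨g, ?_, hleft, hright'⟩
  rw [contDiff_iff_contDiffAt]
  intro y
  have hfx : f (g y) = y := hright y
  set x := g y with hx_def
  set B : E →L[ℝ] E := (fderiv ℝ φ x).smulRight c with hB_def
  have hnB : ‖B‖ < 1 := by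
    rw [hB_def, ContinuousLinearMap.norm_smulRight_apply]
    have hb : ‖fderiv ℝ φ x‖ ≤ (K : ℝ) := norm_fderiv_le_of_lipschitz ℝ hlip
    calc ‖fderiv ℝ φ x‖ * ‖c‖ ≤ (K : ℝ) * ‖c‖ :=
          mul_le_mul_of_nonneg_right hb (norm_nonneg c)
      _ < 1 := hc
  set u : (E →L[ℝ] E)ˣ := Units.oneSub (-B) (by rwa [norm_neg]) with hu_def
  set A' : E ≃L[ℝ] E := ContinuousLinearEquiv.unitsEquiv ℝ E u with hA'_def
  have hA'coe : (A' : E →L[ℝ] E) = ContinuousLinearMap.id ℝ E + B := by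
    ext z
    have h1 : (A' : E →L[ℝ] E) z = (u : E →L[ℝ] E) z := rfl
    rw [h1, show ((u : E →L[ℝ] E)) = 1 - (-B) from rfl]
    simp [sub_neg_eq_add]
  have hd : HasFDerivAt φ (fderiv ℝ φ x) x :=
    ((hφ.differentiable hone) x).hasFDerivAt
  have hfA : HasFDerivAt f (A' : E →L[ℝ] E) x := by
    rw [hA'coe]
    exact (hasFDerivAt_id x).add (hd.smul_const c)
  have hcd : ContDiffAt ℝ ∞ f x := hf.contDiffAt
  have hln : ContDiffAt ℝ ∞ (hcd.localInverse hfA hone) (f x) :=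
    hcd.to_localInverse hfA hone
  have hev : ∀ᶠ z in 𝓝 (f x), f (hcd.localInverse hfA hone z) = z :=
    (hcd.hasStrictFDerivAt' hfA hone).eventually_right_inverse
  have heq : g =ᶠ[𝓝 (f x)] hcd.localInverse hfA hone := by
    filter_upwards [hev] with z hz
    conv_lhs => rw [← hz]
    exact hleft _
  rw [hfx] at hln heq
  exact hln.congr_of_eventuallyEq heq

/-- Small moves within a ball are realized by global diffeomorphisms supported in the ball. -/
theorem exists_small_move (a : E) {r : ℝ} (hr : 0 < r) :
    ∃ ε > 0, ∀ b : E, dist b a < ε →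
      ∃ f g : E → E, ContDiff ℝ ∞ f ∧ ContDiff ℝ ∞ g ∧ (∀ x, g (f x) = x) ∧
        (∀ y, f (g y) = y) ∧ f a = b ∧ ∀ x ∉ ball a r, f x = x := by
  set bump : ContDiffBump a := ⟨r / 2, r, by positivity, by linarith⟩ with hbump
  set φ : E → ℝ := ⇑bump with hφ_def
  have hφ : ContDiff ℝ ∞ φ := bump.contDiff
  obtain ⟨K, hK⟩ :=
    ContDiff.lipschitzWith_of_hasCompactSupport bump.hasCompactSupport hφ hone
  refine ⟨1 / ((K : ℝ) + 1), by positivity, fun b hb => ?_⟩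
  set c : E := b - a with hc_def
  have hc : (K : ℝ) * ‖c‖ < 1 := by
    have h1 : ‖c‖ < 1 / ((K : ℝ) + 1) := by
      rwa [hc_def, ← dist_eq_norm]
    have h2 : (0 : ℝ) ≤ (K : ℝ) := K.coe_nonneg
    have hKpos : (0:ℝ) < (K:ℝ) + 1 := by positivity
    calc (K:ℝ) * ‖c‖ ≤ (K:ℝ) * (1/((K:ℝ)+1)) := mul_le_mul_of_nonneg_left h1.le h2
      _ < 1 := by rw [mul_one_div, div_lt_one hKpos]; linarith
  obtain ⟨g, hg, hleft, hright⟩ := perturb_id hφ hK c hc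
  refine ⟨fun x => x + φ x • c, g, contDiff_id.add (hφ.smul contDiff_const), hg,
    hleft, hright, ?_, ?_⟩
  · show a + φ a • c = b
    have h1 : φ a = 1 := bump.one_of_mem_closedBall (mem_closedBall_self (by positivity))
    rw [h1, one_smul, hc_def]
    abel
  · intro x hx
    show x + φ x • c = x
    have h0 : φ x = 0 := by
      rw [← Function.notMem_support]
      rw [hφ_def, bump.support_eq]
      exact hx
    rw [h0, zero_smul, add_zero]

end AuxiliaryEuclidean

section AuxiliaryManifold

/-- An open subset of a manifold which is "smoothly parametrized by all of `ℝⁿ`". -/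
def NiceBall (n : ℕ) {M : Type*} [TopologicalSpace M]
    [ChartedSpace (EuclideanSpace ℝ (Fin n)) M] (U : Set M) : Prop :=
  IsOpen U ∧ ∃ (φ : M → EuclideanSpace ℝ (Fin n)) (ψ : EuclideanSpace ℝ (Fin n) → M),
    ContMDiffOn (𝓡 n) (𝓡 n) ∞ φ U ∧ ContMDiff (𝓡 n) (𝓡 n) ∞ ψ ∧
    Set.range ψ = U ∧ (∀ x ∈ U, ψ (φ x) = x) ∧ ∀ y, φ (ψ y) = y

variable {n : ℕ} {M : Type*} [TopologicalSpace M] [T2Space M]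
  [ChartedSpace (EuclideanSpace ℝ (Fin n)) M] [IsManifold (𝓡 n) ∞ M]

theorem exists_niceBall (p : M) : ∃ U : Set M, NiceBall n U ∧ p ∈ U := by
  set e := extChartAt (𝓡 n) p with he_def
  have hsrc : IsOpen e.source := isOpen_extChartAt_source p
  have htgt : IsOpen e.target := isOpen_extChartAt_target p
  have hpe : e p ∈ e.target := mem_extChartAt_target p
  obtain ⟨r, hr, hball⟩ := Metric.isOpen_iff.1 htgt _ hpe
  set a := e p with ha_def
  set B := OpenPartialHomeomorph.univBall a r with hB_def
  have hBtgt : B.target = ball a r := OpenPartialHomeomorph.univBall_target a hr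
  have hBsrc : B.source = univ := OpenPartialHomeomorph.univBall_source a r
  set U : Set M := e.source ∩ e ⁻¹' (ball a r) with hU_def
  have hUopen : IsOpen U :=
    (continuousOn_extChartAt p).isOpen_inter_preimage hsrc isOpen_ball
  have hmapsB : ∀ y : EuclideanSpace ℝ (Fin n), B y ∈ ball a r := by
    intro y
    rw [← hBtgt]
    exact B.map_source (by rw [hBsrc]; trivial)
  set φ : M → EuclideanSpace ℝ (Fin n) := fun x => B.symm (e x) with hφ_def
  set ψ : EuclideanSpace ℝ (Fin n) → M := fun y => e.symm (B y) with hψ_def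
  have hψx : ∀ y, ψ y ∈ U := by
    intro y
    have h1 : B y ∈ e.target := hball (hmapsB y)
    constructor
    · exact e.map_target h1
    · show e (e.symm (B y)) ∈ ball a r
      rw [e.right_inv h1]
      exact hmapsB y
  have hψφ : ∀ x ∈ U, ψ (φ x) = x := by
    intro x hx
    show e.symm (B (B.symm (e x))) = x
    rw [B.right_inv (by rw [hBtgt]; exact hx.2), e.left_inv hx.1]
  have hφψ : ∀ y, φ (ψ y) = y := by
    intro y
    show B.symm (e (e.symm (B y))) = y
    rw [e.right_inv (hball (hmapsB y)), B.left_inv (by rw [hBsrc]; trivial)]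
  refine ⟨U, ⟨hUopen, φ, ψ, ?_, ?_, ?_, hψφ, hφψ⟩, ?_⟩
  · -- ContMDiffOn φ U
    have h1 : ContMDiffOn (𝓡 n) (𝓡 n) ∞ e (chartAt (EuclideanSpace ℝ (Fin n)) p).source :=
      contMDiffOn_extChartAt
    have h2 : ContMDiffOn (𝓡 n) (𝓡 n) ∞ B.symm (ball a r) :=
      (OpenPartialHomeomorph.contDiffOn_univBall_symm (c := a) (r := r)).contMDiffOn
    refine h2.comp (h1.mono ?_) ?_
    · rw [← extChartAt_source (𝓡 n) p]; exact inter_subset_left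
    · intro x hx; exact hx.2
  · -- ContMDiff ψ
    intro y
    have h1 : ContMDiff (𝓡 n) (𝓡 n) ∞ (B : EuclideanSpace ℝ (Fin n) → EuclideanSpace ℝ (Fin n)) :=
      (OpenPartialHomeomorph.contDiff_univBall (c := a) (r := r)).contMDiff
    have h2 : ContMDiffAt (𝓡 n) (𝓡 n) ∞ e.symm (B y) :=
      (contMDiffOn_extChartAt_symm p).contMDiffAt (htgt.mem_nhds (hball (hmapsB y)))
    exact (h2.comp y (h1 y)).contMDiffWithinAt
  · -- range ψ = U
    apply Set.eq_of_subset_of_subset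
    · rintro _ ⟨y, rfl⟩; exact hψx y
    · intro x hx; exact ⟨φ x, hψφ x hx⟩
  · exact ⟨mem_extChartAt_source p, by show e p ∈ ball a r; exact mem_ball_self hr⟩

/-- A "compactly supported diffeotopy-type move" of a manifold. -/
def Move (n : ℕ) {M : Type*} [TopologicalSpace M]
    [ChartedSpace (EuclideanSpace ℝ (Fin n)) M] (p q : M) (W : Set M) : Prop :=
  ∃ Φ Ψ : M → M, ContMDiff (𝓡 n) (𝓡 n) ∞ Φ ∧ ContMDiff (𝓡 n) (𝓡 n) ∞ Ψ ∧
    (∀ x, Ψ (Φ x) = x) ∧ (∀ x, Φ (Ψ x) = x) ∧ Φ p = q ∧ ∀ x ∉ W, Φ x = x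

theorem exists_move_nhds (p : M) {W : Set M} (hW : W ∈ 𝓝 p) :
    ∃ V ∈ 𝓝 p, ∀ q ∈ V, Move n p q W := by
  classical
  set e := extChartAt (𝓡 n) p with he_def
  have hsrc : IsOpen e.source := isOpen_extChartAt_source p
  have htgt : IsOpen e.target := isOpen_extChartAt_target p
  have hpe : e p ∈ e.target := mem_extChartAt_target p
  set a := e p with ha_def
  -- choose r such that closedBall a r ⊆ target and e.symm '' closedBall ⊆ interior W ∩ source
  set O : Set M := interior W ∩ e.source with hO_def
  have hOopen : IsOpen O := isOpen_interior.inter hsrc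
  have hpO : p ∈ O := ⟨mem_interior_iff_mem_nhds.2 hW, mem_extChartAt_source p⟩
  have hsymm_cont : ContinuousAt e.symm a := by
    exact (continuousOn_extChartAt_symm p).continuousAt (htgt.mem_nhds hpe)
  have hsymm_a : e.symm a = p := extChartAt_to_inv p
  have hN : e.symm ⁻¹' O ∩ e.target ∈ 𝓝 a := by
    refine Filter.inter_mem ?_ (htgt.mem_nhds hpe)
    exact hsymm_cont.preimage_mem_nhds (by rw [hsymm_a] at *; exact hOopen.mem_nhds hpO)
  obtain ⟨r, hr, hrN⟩ := Metric.nhds_basis_closedBall.mem_iff.1 hN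
  have hcb_tgt : closedBall a r ⊆ e.target := fun z hz => (hrN hz).2
  have hcb_O : ∀ z ∈ closedBall a r, e.symm z ∈ O := fun z hz => (hrN hz).1
  obtain ⟨ε, hε, hmove⟩ := exists_small_move a hr
  set V : Set M := e.source ∩ e ⁻¹' (ball a (min ε r)) with hV_def
  have hVopen : IsOpen V :=
    (continuousOn_extChartAt p).isOpen_inter_preimage hsrc isOpen_ball
  have hpV : p ∈ V := ⟨mem_extChartAt_source p, by
    show e p ∈ ball a (min ε r); simp [ha_def, lt_min hε hr]⟩
  refine ⟨V, hVopen.mem_nhds hpV, fun q hq => ?_⟩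
  set b := e q with hb_def
  have hb_ball : b ∈ ball a (min ε r) := hq.2
  have hbε : dist b a < ε := lt_of_lt_of_le (mem_ball.1 hb_ball) (min_le_left _ _)
  have hbr : b ∈ ball a r := mem_ball.2 (lt_of_lt_of_le (mem_ball.1 hb_ball) (min_le_right _ _))
  obtain ⟨f, g, hf, hg, hgf, hfg, hfa, hfid⟩ := hmove b hbε
  have hinj : Function.Injective f := fun x y h => by
    have := congrArg g h; rwa [hgf, hgf] at this
  -- f and g preserve the ball and fix its complement
  have hf_ball : ∀ z ∈ ball a r, f z ∈ ball a r := by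
    intro z hz
    by_contra hfz
    have h1 : f (f z) = f z := hfid _ hfz
    have h2 : f z = z := hinj h1
    rw [h2] at hfz; exact hfz hz
  have hg_id : ∀ z ∉ ball a r, g z = z := by
    intro z hz
    have h1 := hgf z
    rwa [hfid z hz] at h1
  have hg_ball : ∀ z ∈ ball a r, g z ∈ ball a r := by
    intro z hz
    by_contra hgz
    have h1 : f (g z) = g z := hfid _ hgz
    rw [hfg z] at h1
    rw [← h1] at hgz
    exact hgz hz
  -- the compact set outside which everything is the identity
  set D : Set M := e.symm '' closedBall a r with hD_def
  have hDcompact : IsCompact D :=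
    (isCompact_closedBall a r).image_of_continuousOn
      ((continuousOn_extChartAt_symm p).mono hcb_tgt)
  have hDsource : D ⊆ e.source := by
    rintro _ ⟨z, hz, rfl⟩; exact e.map_target (hcb_tgt hz)
  have hDclosed : IsClosed D := hDcompact.isClosed
  -- the two glued maps and their smoothness
  have key : ∀ h : EuclideanSpace ℝ (Fin n) → EuclideanSpace ℝ (Fin n), ContDiff ℝ ∞ h →
      (∀ z ∉ ball a r, h z = z) → (∀ z ∈ ball a r, h z ∈ ball a r) →
      ContMDiff (𝓡 n) (𝓡 n) ∞ (fun x => if x ∈ e.source then e.symm (h (e x)) else x) := by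
    intro h hh hid hball
    have hmem : ∀ x ∈ e.source, h (e x) ∈ e.target := by
      intro x hx
      by_cases hxb : e x ∈ ball a r
      · exact hcb_tgt (ball_subset_closedBall (hball _ hxb))
      · rw [hid _ hxb]; exact e.map_source hx
    intro x
    by_cases hx : x ∈ e.source
    · have c1 : ContMDiffAt (𝓡 n) (𝓡 n) ∞ e x := by
        apply contMDiffAt_extChartAt'
        rwa [← extChartAt_source (𝓡 n) p]
      have c2 : ContMDiffAt (𝓡 n) (𝓡 n) ∞ h (e x) := hh.contMDiff.contMDiffAt
      have c3 : ContMDiffAt (𝓡 n) (𝓡 n) ∞ e.symm (h (e x)) :=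
        (contMDiffOn_extChartAt_symm p).contMDiffAt (htgt.mem_nhds (hmem x hx))
      have cF : ContMDiffAt (𝓡 n) (𝓡 n) ∞ (fun y => e.symm (h (e y))) x :=
        c3.comp x (c2.comp x c1)
      refine cF.congr_of_eventuallyEq ?_
      filter_upwards [hsrc.mem_nhds hx] with y hy
      rw [if_pos hy]
    · have hxD : x ∉ D := fun hxD => hx (hDsource hxD)
      have hev : (fun y => if y ∈ e.source then e.symm (h (e y)) else y) =ᶠ[𝓝 x] id := by
        filter_upwards [hDclosed.isOpen_compl.mem_nhds hxD] with y hy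
        by_cases hys : y ∈ e.source
        · rw [if_pos hys]
          have hyb : e y ∉ ball a r := by
            intro hyb
            exact hy ⟨e y, ball_subset_closedBall hyb, e.left_inv hys⟩
          show e.symm (h (e y)) = y
          rw [hid _ hyb, e.left_inv hys]
        · rw [if_neg hys]; rfl
      exact (contMDiff_id x).congr_of_eventuallyEq hev
  set Φ : M → M := fun x => if x ∈ e.source then e.symm (f (e x)) else x with hΦ_def
  set Ψ : M → M := fun x => if x ∈ e.source then e.symm (g (e x)) else x with hΨ_def
  have hfmem : ∀ x ∈ e.source, f (e x) ∈ e.target := by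
    intro x hx
    by_cases hxb : e x ∈ ball a r
    · exact hcb_tgt (ball_subset_closedBall (hf_ball _ hxb))
    · rw [hfid _ hxb]; exact e.map_source hx
  have hgmem : ∀ x ∈ e.source, g (e x) ∈ e.target := by
    intro x hx
    by_cases hxb : e x ∈ ball a r
    · exact hcb_tgt (ball_subset_closedBall (hg_ball _ hxb))
    · rw [hg_id _ hxb]; exact e.map_source hx
  have hΨΦ : ∀ x, Ψ (Φ x) = x := by
    intro x
    by_cases hx : x ∈ e.source
    · have h1 : Φ x = e.symm (f (e x)) := if_pos hx
      have h2 : Φ x ∈ e.source := by rw [h1]; exact e.map_target (hfmem x hx)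
      have h3 : e (Φ x) = f (e x) := by rw [h1]; exact e.right_inv (hfmem x hx)
      show (if Φ x ∈ e.source then e.symm (g (e (Φ x))) else Φ x) = x
      rw [if_pos h2, h3, hgf, e.left_inv hx]
    · have h1 : Φ x = x := if_neg hx
      show (if Φ x ∈ e.source then e.symm (g (e (Φ x))) else Φ x) = x
      rw [h1, if_neg hx]
  have hΦΨ : ∀ x, Φ (Ψ x) = x := by
    intro x
    by_cases hx : x ∈ e.source
    · have h1 : Ψ x = e.symm (g (e x)) := if_pos hx
      have h2 : Ψ x ∈ e.source := by rw [h1]; exact e.map_target (hgmem x hx)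
      have h3 : e (Ψ x) = g (e x) := by rw [h1]; exact e.right_inv (hgmem x hx)
      show (if Ψ x ∈ e.source then e.symm (f (e (Ψ x))) else Ψ x) = x
      rw [if_pos h2, h3, hfg, e.left_inv hx]
    · have h1 : Ψ x = x := if_neg hx
      show (if Ψ x ∈ e.source then e.symm (f (e (Ψ x))) else Ψ x) = x
      rw [h1, if_neg hx]
  refine ⟨Φ, Ψ, key f hf hfid hf_ball, key g hg hg_id hg_ball, hΨΦ, hΦΨ, ?_, ?_⟩
  · show (if p ∈ e.source then e.symm (f (e p)) else p) = q
    rw [if_pos (mem_extChartAt_source p), ← ha_def, hfa, hb_def, e.left_inv hq.1]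
  · intro x hx
    show (if x ∈ e.source then e.symm (f (e x)) else x) = x
    by_cases hxs : x ∈ e.source
    · rw [if_pos hxs]
      have hxb : e x ∉ ball a r := by
        intro hxb
        have : e.symm (e x) ∈ O := hcb_O _ (ball_subset_closedBall hxb)
        rw [e.left_inv hxs] at this
        exact hx (interior_subset this.1)
      rw [hfid _ hxb, e.left_inv hxs]
    · rw [if_neg hxs]

/-- Pushing a nice ball forward along a global diffeomorphism gives a nice ball. -/
theorem NiceBall.image {U : Set M} (hU : NiceBall n U) {Φ Ψ : M → M}
    (hΦ : ContMDiff (𝓡 n) (𝓡 n) ∞ Φ) (hΨ : ContMDiff (𝓡 n) (𝓡 n) ∞ Ψ)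
    (hΨΦ : ∀ x, Ψ (Φ x) = x) (hΦΨ : ∀ x, Φ (Ψ x) = x) : NiceBall n (Φ '' U) := by
  obtain ⟨hUopen, φ, ψ, hφ, hψ, hrange, hψφ, hφψ⟩ := hU
  have himg : Φ '' U = Ψ ⁻¹' U := by
    ext x
    constructor
    · rintro ⟨u, hu, rfl⟩; show Ψ (Φ u) ∈ U; rw [hΨΦ u]; exact hu
    · intro hx; exact ⟨Ψ x, hx, hΦΨ x⟩
  refine ⟨himg ▸ hUopen.preimage hΨ.continuous, φ ∘ Ψ, Φ ∘ ψ, ?_, hΦ.comp hψ, ?_, ?_, ?_⟩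
  · refine hφ.comp (hΨ.contMDiffOn) ?_
    rintro _ ⟨u, hu, rfl⟩
    show Ψ (Φ u) ∈ U; rw [hΨΦ u]; exact hu
  · rw [Set.range_comp, hrange]
  · rintro _ ⟨u, hu, rfl⟩
    show Φ (ψ (φ (Ψ (Φ u)))) = Φ u
    rw [hΨΦ u, hψφ u hu]
  · intro y
    show φ (Ψ (Φ (ψ y))) = y
    rw [hΨΦ (ψ y), hφψ y]

theorem exists_niceBall_superset [ConnectedSpace M] (S : Set M) (hS : S.Finite) :
    ∃ U : Set M, NiceBall n U ∧ S ⊆ U := by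
  refine Set.Finite.induction_on S hS ?_ ?_
  · obtain ⟨U, hU, -⟩ := exists_niceBall (n := n) (Classical.arbitrary M)
    exact ⟨U, hU, empty_subset _⟩
  · intro p T hpT hTfin IH
    obtain ⟨U₀, hU₀, hTU₀⟩ := IH
    set A : Set M := {x | ∃ U : Set M, NiceBall n U ∧ insert x T ⊆ U} with hA_def
    have hAopen : IsOpen A := by
      rw [isOpen_iff_mem_nhds]
      rintro x ⟨U, hU, hxU⟩
      refine Filter.mem_of_superset (hU.1.mem_nhds (hxU (mem_insert x T))) ?_
      intro y hy
      exact ⟨U, hU, insert_subset hy ((subset_insert x T).trans hxU)⟩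
    have hAclosed : IsClosed A := by
      apply isClosed_of_closure_subset
      intro x hx
      have hTx : IsClosed (T \ {x}) := (hTfin.subset diff_subset).isClosed
      have hWx : x ∈ (T \ {x})ᶜ := fun h => h.2 rfl
      obtain ⟨V, hV, hmove⟩ := exists_move_nhds (n := n) x (hTx.isOpen_compl.mem_nhds hWx)
      obtain ⟨q, hqV, hqA⟩ := mem_closure_iff_nhds.1 hx V hV
      obtain ⟨Φ, Ψ, hΦ, hΨ, hΨΦ, hΦΨ, hΦx, hΦid⟩ := hmove q hqV
      obtain ⟨U, hU, hqU⟩ := hqA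
      refine ⟨Ψ '' U, hU.image hΨ hΦ hΦΨ hΨΦ, ?_⟩
      have hΨq : Ψ q = x := by rw [← hΦx, hΨΦ]
      refine insert_subset ⟨q, hqU (mem_insert q T), hΨq⟩ ?_
      intro t ht
      by_cases htx : t = x
      · rw [htx]; exact ⟨q, hqU (mem_insert q T), hΨq⟩
      · have htW : t ∉ (T \ {x})ᶜ := fun h => h ⟨ht, htx⟩
        have hΦt : Φ t = t := hΦid t htW
        have hΨt : Ψ t = t := by
          conv_lhs => rw [← hΦt]
          exact hΨΦ t
        exact ⟨t, hqU (subset_insert q T ht), hΨt⟩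
    have hAne : A.Nonempty := by
      obtain ⟨φ, ψ, -, -, hrange, -, -⟩ := hU₀.2
      refine ⟨ψ 0, U₀, hU₀, insert_subset ?_ hTU₀⟩
      rw [← hrange]; exact mem_range_self 0
    have hAuniv : A = univ := IsClopen.eq_univ ⟨hAclosed, hAopen⟩ hAne
    have hpA : p ∈ A := hAuniv ▸ mem_univ p
    obtain ⟨U, hU, hins⟩ := hpA
    exact ⟨U, hU, hins⟩

end AuxiliaryManifold

/-- Let `M` be a connected smooth `n`-dimensional manifold (`n ≥ 1`, without boundary) and let
`S ⊆ M` be a finite set of points.  Then there is a compact set `B ⊆ M`, diffeomorphic to the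
closed unit ball of `ℝⁿ`, whose interior contains `S`.  The diffeomorphism is recorded by a pair
of maps `F : M → ℝⁿ` and `G : ℝⁿ → M`, smooth on `B` and on the closed unit ball respectively,
which are mutually inverse bijections between `B` and the closed unit ball. -/
theorem exists_ball_like_compact_set_containing_finite_set {n : ℕ} (hn : 0 < n)
    {M : Type*} [TopologicalSpace M] [T2Space M]
    [ChartedSpace (EuclideanSpace ℝ (Fin n)) M] [IsManifold (𝓡 n) (⊤ : ℕ∞) M]
    [ConnectedSpace M]
    (S : Set M) (hS : S.Finite) :
    ∃ B : Set M, IsCompact B ∧ S ⊆ interior B ∧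
      ∃ (F : M → EuclideanSpace ℝ (Fin n)) (G : EuclideanSpace ℝ (Fin n) → M),
        ContMDiffOn (𝓡 n) (𝓡 n) (⊤ : ℕ∞) F B ∧
        ContMDiffOn (𝓡 n) (𝓡 n) (⊤ : ℕ∞) G (closedBall 0 1) ∧
        F '' B = closedBall 0 1 ∧
        (∀ x ∈ B, G (F x) = x) ∧
        (∀ y ∈ closedBall (0 : EuclideanSpace ℝ (Fin n)) 1, F (G y) = y) := by
  obtain ⟨U, ⟨hUopen, φ, ψ, hφ, hψ, hrange, hψφ, hφψ⟩, hSU⟩ := exists_niceBall_superset (n := n) S hS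
  -- the image of S is bounded, hence inside some ball of radius R > 0
  obtain ⟨R, hR0, hRS⟩ := ((hS.image φ).isBounded).subset_ball_lt 0 0
  set B : Set M := ψ '' closedBall 0 R with hB_def
  have hRne : (R : ℝ) ≠ 0 := ne_of_gt hR0
  set F : M → EuclideanSpace ℝ (Fin n) := fun x => R⁻¹ • φ x with hF_def
  set G : EuclideanSpace ℝ (Fin n) → M := fun y => ψ (R • y) with hG_def
  have hBU : B ⊆ U := by
    rintro _ ⟨z, hz, rfl⟩
    rw [← hrange]; exact mem_range_self z
  have hBcompact : IsCompact B := (isCompact_closedBall _ _).image hψ.continuous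
  have hopen_img : ψ '' ball 0 R = U ∩ φ ⁻¹' ball 0 R := by
    ext x
    constructor
    · rintro ⟨z, hz, rfl⟩
      refine ⟨by rw [← hrange]; exact mem_range_self z, ?_⟩
      show φ (ψ z) ∈ ball 0 R
      rw [hφψ z]; exact hz
    · rintro ⟨hxU, hxb⟩
      exact ⟨φ x, hxb, hψφ x hxU⟩
  have hSint : S ⊆ interior B := by
    have h1 : IsOpen (ψ '' ball 0 R) := by
      rw [hopen_img]
      exact hφ.continuousOn.isOpen_inter_preimage hUopen isOpen_ball
    have h2 : ψ '' ball 0 R ⊆ B := Set.image_mono ball_subset_closedBall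
    have h3 : S ⊆ ψ '' ball 0 R := by
      intro s hs
      exact ⟨φ s, hRS (mem_image_of_mem φ hs), hψφ s (hSU hs)⟩
    exact h3.trans (interior_maximal h2 h1)
  have hsmul : ∀ c : ℝ, ContMDiff (𝓡 n) (𝓡 n) ∞
      (fun y : EuclideanSpace ℝ (Fin n) => c • y) := fun c =>
    (contDiff_const_smul (𝕜 := ℝ) (F := EuclideanSpace ℝ (Fin n)) c).contMDiff
  refine ⟨B, hBcompact, hSint, F, G, ?_, ?_, ?_, ?_, ?_⟩
  · -- F smooth on B
    exact ((hsmul R⁻¹).comp_contMDiffOn (hφ.mono hBU))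
  · -- G smooth on the closed ball
    exact (hψ.comp (hsmul R)).contMDiffOn
  · -- F '' B = closedBall 0 1
    ext y
    constructor
    · rintro ⟨_, ⟨z, hz, rfl⟩, rfl⟩
      show R⁻¹ • φ (ψ z) ∈ closedBall 0 1
      rw [hφψ z, mem_closedBall_zero_iff, norm_smul, norm_inv, Real.norm_eq_abs,
        abs_of_pos hR0]
      rw [mem_closedBall_zero_iff] at hz
      calc R⁻¹ * ‖z‖ ≤ R⁻¹ * R := by
            exact mul_le_mul_of_nonneg_left hz (by positivity)
        _ = 1 := inv_mul_cancel₀ hRne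
    · intro hy
      refine ⟨ψ (R • y), ⟨R • y, ?_, rfl⟩, ?_⟩
      · rw [mem_closedBall_zero_iff] at hy ⊢
        rw [norm_smul, Real.norm_eq_abs, abs_of_pos hR0]
        calc R * ‖y‖ ≤ R * 1 := mul_le_mul_of_nonneg_left hy hR0.le
          _ = R := mul_one R
      · show R⁻¹ • φ (ψ (R • y)) = y
        rw [hφψ, smul_smul, inv_mul_cancel₀ hRne, one_smul]
  · -- G ∘ F = id on B
    rintro _ ⟨z, hz, rfl⟩
    show ψ (R • R⁻¹ • φ (ψ z)) = ψ z
    rw [hφψ z, smul_smul, mul_inv_cancel₀ hRne, one_smul]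
  · -- F ∘ G = id on closedBall
    intro y _
    show R⁻¹ • φ (ψ (R • y)) = y
    rw [hφψ, smul_smul, inv_mul_cancel₀ hRne, one_smul]
end
end

section
/- Let f, g : Sⁿ → Sⁿ be continuous self-maps of the n-sphere that both send a fixed basepoint p ∈ Sⁿ to a fixed point q ∈ Sⁿ. If deg(f) = deg(g), then f and g are homotopic through maps sending p to q. -/
open Metric Module Submodule RealInnerProductSpace

noncomputable section

variable {E : Type*} [NormedAddCommGroup E] [InnerProductSpace ℝ E] [FiniteDimensional ℝ E]

/-- The rotation taking `x` to `y` (for unit vectors `x`, `y` with `x + y ≠ 0`), as a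
composition of two reflections. -/
def rotAux (x y : E) : E ≃ₗᵢ[ℝ] E :=
  (reflection (ℝ ∙ x)ᗮ).trans (reflection (ℝ ∙ (x + y))ᗮ)

lemma rotAux_apply (x y v : E) :
    rotAux x y v = reflection (ℝ ∙ (x + y))ᗮ (reflection (ℝ ∙ x)ᗮ v) := rfl

lemma rotAux_self (x : E) : rotAux x x = LinearIsometryEquiv.refl ℝ E := by
  have h : (ℝ ∙ (x + x)) = ℝ ∙ x := by
    rw [← two_smul ℝ x]
    exact span_singleton_smul_eq (by norm_num : IsUnit (2:ℝ)) x
  rw [rotAux]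
  simp only [h]
  rw [reflection_trans_reflection]

lemma rotAux_fst (x y : E) (h : ‖x‖ = ‖y‖) : rotAux x y x = y := by
  rw [rotAux_apply, reflection_orthogonalComplement_singleton_eq_neg]
  have h2 : (ℝ ∙ (x + y)) = ℝ ∙ (-x - y) := by
    have : -x - y = (-1 : ℝ) • (x + y) := by module
    rw [this, span_singleton_smul_eq (by norm_num : IsUnit (-1:ℝ))]
  simp only [h2]
  exact reflection_sub (by simpa using h)

lemma rotAux_fix {V : Submodule ℝ E} {x y : E} (hx : x ∈ V) (hy : y ∈ V) {v : E}
    (hv : v ∈ Vᗮ) : rotAux x y v = v := by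
  have h1 : v ∈ (ℝ ∙ x)ᗮ :=
    Submodule.orthogonal_le ((span_singleton_le_iff_mem _ _).2 hx) hv
  have h2 : v ∈ (ℝ ∙ (x + y))ᗮ :=
    Submodule.orthogonal_le ((span_singleton_le_iff_mem _ _).2 (V.add_mem hx hy)) hv
  rw [rotAux_apply, reflection_mem_subspace_eq_self h1, reflection_mem_subspace_eq_self h2]

lemma rotAux_det (x y : E) (hx : x ≠ 0) (hxy : x + y ≠ 0) :
    LinearMap.det (rotAux x y).toLinearMap = 1 := by
  have : (rotAux x y).toLinearMap =
      (reflection (ℝ ∙ (x + y))ᗮ).toLinearMap ∘ₗ (reflection (ℝ ∙ x)ᗮ).toLinearMap := rfl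
  rw [this, LinearMap.det_comp, det_reflection, det_reflection,
    Submodule.orthogonal_orthogonal, Submodule.orthogonal_orthogonal,
    finrank_span_singleton hx, finrank_span_singleton hxy]
  norm_num

lemma reflection_compl_singleton_apply (u v : E) (hu : u ≠ 0) :
    reflection (ℝ ∙ u)ᗮ v = v - ((2 * ⟪u, v⟫) / (‖u‖ ^ 2)) • u := by
  rw [reflection_orthogonal_apply, reflection_singleton_apply]
  have h : (2 * ⟪u, v⟫) / ‖u‖ ^ 2 = ⟪u, v⟫ / ‖u‖ ^ 2 + ⟪u, v⟫ / ‖u‖ ^ 2 := by ring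
  rw [h, add_smul, two_smul]
  simp only [RCLike.ofReal_real_eq_id, id_eq]
  module
lemma continuous_rotAux {X : Type*} [TopologicalSpace X] {x y v : X → E}
    (hx : Continuous x) (hy : Continuous y) (hv : Continuous v)
    (hx0 : ∀ s, x s ≠ 0) (hxy : ∀ s, x s + y s ≠ 0) :
    Continuous fun s => rotAux (x s) (y s) (v s) := by
  have hxyc : Continuous fun s => x s + y s := hx.add hy
  have key : (fun s => rotAux (x s) (y s) (v s)) = fun s =>
      (v s - ((2 * ⟪x s, v s⟫) / (‖x s‖ ^ 2)) • x s) -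
        ((2 * ⟪x s + y s, v s - ((2 * ⟪x s, v s⟫) / (‖x s‖ ^ 2)) • x s⟫) /
          (‖x s + y s‖ ^ 2)) • (x s + y s) := by
    funext s
    rw [rotAux_apply, reflection_compl_singleton_apply _ _ (hx0 s),
      reflection_compl_singleton_apply _ _ (hxy s)]
  rw [key]
  have hin : Continuous fun s => v s - ((2 * ⟪x s, v s⟫) / (‖x s‖ ^ 2)) • x s := by
    refine hv.sub (Continuous.smul ?_ hx)
    refine Continuous.div (continuous_const.mul (hx.inner hv)) (hx.norm.pow 2) ?_
    exact fun s => pow_ne_zero 2 (norm_ne_zero_iff.mpr (hx0 s))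
  refine hin.sub (Continuous.smul ?_ hxyc)
  refine Continuous.div (continuous_const.mul (hxyc.inner hin)) (hxyc.norm.pow 2) ?_
  exact fun s => pow_ne_zero 2 (norm_ne_zero_iff.mpr (hxy s))

lemma add_ne_zero_of_norm_sub_lt {x y : E} (hx : ‖x‖ = 1) (hy : ‖y‖ = 1)
    (h : ‖x - y‖ < 1) : x + y ≠ 0 := by
  intro h0
  have hyx : y = -x := eq_neg_of_add_eq_zero_right h0
  rw [hyx, sub_neg_eq_add, ← two_smul ℝ x, norm_smul] at h
  simp [hx] at h
open unitInterval in
lemma transport (V : Submodule ℝ E) (N : ℕ) :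
    ∀ (c : I → E), Continuous c → (∀ s, c s ∈ V) → (∀ s, ‖c s‖ = 1) →
    (∀ s t : I, |(s : ℝ) - (t : ℝ)| ≤ 1 / (N + 1) → ‖c s - c t‖ < 1) →
    ∃ W : I → (E ≃ₗᵢ[ℝ] E),
      (Continuous fun p : I × E => W p.1 p.2) ∧
      W 0 = LinearIsometryEquiv.refl ℝ E ∧
      (∀ s, W s (c s) = c 0) ∧
      (∀ s, ∀ v ∈ Vᗮ, W s v = v) ∧
      (∀ s, LinearMap.det (W s).toLinearMap = 1) := by
  induction N with
  | zero =>
    intro c hc hmem hnorm hfine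
    have hclose : ∀ s : I, ‖c s - c 0‖ < 1 := by
      intro s
      refine hfine s 0 ?_
      rw [Set.Icc.coe_zero, sub_zero, abs_of_nonneg s.2.1]
      push_cast
      have := s.2.2
      linarith
    have hne : ∀ s : I, c s + c 0 ≠ 0 := fun s =>
      add_ne_zero_of_norm_sub_lt (hnorm s) (hnorm 0) (hclose s)
    have hne0 : ∀ s : I, c s ≠ 0 := fun s h => absurd (hnorm s) (by simp [h])
    refine ⟨fun s => rotAux (c s) (c 0), ?_, rotAux_self (c 0), ?_, ?_, ?_⟩
    · exact continuous_rotAux (hc.comp continuous_fst) continuous_const continuous_snd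
        (fun p => hne0 p.1) (fun p => hne p.1)
    · exact fun s => rotAux_fst _ _ (by rw [hnorm s, hnorm 0])
    · exact fun s v hv => rotAux_fix (hmem s) (hmem 0) hv
    · exact fun s => rotAux_det _ _ (hne0 s) (hne s)
  | succ N IH =>
    intro c hc hmem hnorm hfine
    set a : ℝ := 1 / (N + 2) with ha_def
    have ha0 : 0 < a := by positivity
    have ha1 : a < 1 := by
      rw [ha_def]
      rw [div_lt_one (by positivity)]
      have : (0:ℝ) ≤ (N:ℝ) := Nat.cast_nonneg N
      linarith
    have h1a : (0:ℝ) < 1 - a := by linarith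
    have hfine' : ∀ s t : I, |(s : ℝ) - (t : ℝ)| ≤ a → ‖c s - c t‖ < 1 := by
      intro s t hst
      refine hfine s t ?_
      rw [ha_def] at hst
      convert hst using 2
      push_cast
      ring
    let t₁ : I := ⟨a, ⟨ha0.le, ha1.le⟩⟩
    let sg : I → I := fun r => ⟨a + r * (1 - a), by
      constructor
      · have : (0:ℝ) ≤ (r:ℝ) * (1 - a) := mul_nonneg r.2.1 h1a.le
        linarith
      · nlinarith [r.2.1, r.2.2]⟩
    have hsg : Continuous sg :=
      Continuous.subtype_mk (continuous_const.add (continuous_subtype_val.mul continuous_const)) _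
    set c₂ : I → E := c ∘ sg with hc₂_def
    have hc₂ : Continuous c₂ := hc.comp hsg
    have hfine₂ : ∀ r r' : I, |(r : ℝ) - (r' : ℝ)| ≤ 1 / (N + 1) → ‖c₂ r - c₂ r'‖ < 1 := by
      intro r r' hrr
      refine hfine' (sg r) (sg r') ?_
      have : |(sg r : ℝ) - (sg r' : ℝ)| = |(r:ℝ) - (r':ℝ)| * (1 - a) := by
        have e : a + (r:ℝ) * (1-a) - (a + (r':ℝ) * (1-a)) = ((r:ℝ) - (r':ℝ)) * (1-a) := by ring
        show |a + (r:ℝ) * (1-a) - (a + (r':ℝ) * (1-a))| = _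
        rw [e, abs_mul, abs_of_nonneg h1a.le]
      rw [this]
      have hN1 : ((N:ℝ) + 1) ≠ 0 := by positivity
      have h2 : 1 - a = a * (N + 1) := by
        rw [ha_def]
        field_simp
        ring
      calc |(r:ℝ) - (r':ℝ)| * (1 - a) ≤ (1 / (N+1)) * (1 - a) := by
            exact mul_le_mul_of_nonneg_right hrr h1a.le
        _ = a := by rw [h2]; field_simp
    obtain ⟨W₂, hW₂c, hW₂0, hW₂e, hW₂f, hW₂d⟩ := IH c₂ hc₂ (fun s => hmem _)
      (fun s => hnorm _) hfine₂
    set R : E ≃ₗᵢ[ℝ] E := rotAux (c t₁) (c 0) with hR_def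
    let ta : I → I := fun s => ⟨max (((s:ℝ) - a) / (1 - a)) 0, by
      constructor
      · exact le_max_right _ _
      · refine max_le ?_ zero_le_one
        rw [div_le_one h1a]
        have := s.2.2
        linarith⟩
    have hta : Continuous ta :=
      Continuous.subtype_mk (((continuous_subtype_val.sub continuous_const).div_const _).max
        continuous_const) _
    let mu : I → I := fun s => ⟨min (s:ℝ) a, by
      constructor
      · exact le_min s.2.1 ha0.le
      · exact min_le_of_right_le ha1.le⟩
    have hmu : Continuous mu :=
      Continuous.subtype_mk (continuous_subtype_val.min continuous_const) _
    have hmua : ∀ s : I, |(mu s : ℝ) - ((0:I) : ℝ)| ≤ a := by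
      intro s
      rw [Set.Icc.coe_zero, sub_zero]
      rw [abs_of_nonneg (le_min s.2.1 ha0.le)]
      exact min_le_right _ _
    have hmune0 : ∀ s : I, c (mu s) ≠ 0 := fun s h =>
      absurd (hnorm (mu s)) (by simp [h])
    have hmune : ∀ s : I, c (mu s) + c 0 ≠ 0 := fun s =>
      add_ne_zero_of_norm_sub_lt (hnorm _) (hnorm 0) (hfine' _ _ (hmua s))
    have ht₁ne0 : c t₁ ≠ 0 := fun h => absurd (hnorm t₁) (by simp [h])
    have ht₁ne : c t₁ + c 0 ≠ 0 := by
      refine add_ne_zero_of_norm_sub_lt (hnorm _) (hnorm 0) (hfine' _ _ ?_)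
      show |a - ((0:I):ℝ)| ≤ a
      rw [Set.Icc.coe_zero, sub_zero, abs_of_nonneg ha0.le]
    set W : I → (E ≃ₗᵢ[ℝ] E) :=
      fun s => if (s:ℝ) ≤ a then rotAux (c (mu s)) (c 0) else (W₂ (ta s)).trans R with hW_def
    have hWs : ∀ s : I, W s =
        if (s:ℝ) ≤ a then rotAux (c (mu s)) (c 0) else (W₂ (ta s)).trans R := fun _ => rfl
    have hmuid : ∀ s : I, (s:ℝ) ≤ a → mu s = s := by
      intro s hs
      apply Subtype.ext
      exact min_eq_left hs
    have hsgta : ∀ s : I, a ≤ (s:ℝ) → sg (ta s) = s := by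
      intro s hs
      apply Subtype.ext
      show a + max (((s:ℝ) - a) / (1 - a)) 0 * (1 - a) = (s:ℝ)
      rw [max_eq_left (div_nonneg (by linarith) h1a.le)]
      field_simp
      ring
    have hsg0 : sg 0 = t₁ := by
      apply Subtype.ext
      show a + ((0:I):ℝ) * (1 - a) = a
      rw [Set.Icc.coe_zero]
      ring
    have hc₂0 : c₂ 0 = c t₁ := by rw [hc₂_def]; simp only [Function.comp_apply, hsg0]
    refine ⟨W, ?_, ?_, ?_, ?_, ?_⟩
    · -- continuity
      have key : (fun p : I × E => W p.1 p.2) = fun p : I × E =>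
          if (p.1 : ℝ) ≤ a then rotAux (c (mu p.1)) (c 0) p.2 else R (W₂ (ta p.1) p.2) := by
        funext p
        rw [hWs p.1]
        rw [apply_ite (fun e : E ≃ₗᵢ[ℝ] E => e p.2)]
        rfl
      rw [key]
      refine Continuous.if_le ?_ ?_ (continuous_subtype_val.comp continuous_fst)
        continuous_const ?_
      · exact continuous_rotAux (hc.comp (hmu.comp continuous_fst)) continuous_const
          continuous_snd (fun p => hmune0 p.1) (fun p => hmune p.1)
      · exact R.continuous.comp (hW₂c.comp ((hta.comp continuous_fst).prodMk continuous_snd))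
      · intro p hp
        have hmup : mu p.1 = t₁ := by
          apply Subtype.ext
          show min (p.1:ℝ) a = a
          rw [hp, min_self]
        have htap : ta p.1 = 0 := by
          apply Subtype.ext
          show max (((p.1:ℝ) - a) / (1 - a)) 0 = ((0:I):ℝ)
          rw [hp, sub_self, zero_div, max_self]
          simp
        rw [hmup, htap, hW₂0]
        rfl
    · -- W 0 = refl
      have h0a : ((0:I):ℝ) ≤ a := by rw [Set.Icc.coe_zero]; exact ha0.le
      rw [hWs 0, if_pos h0a]
      have : mu 0 = 0 := hmuid 0 h0a
      rw [this]
      exact rotAux_self (c 0)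
    · -- evaluation
      intro s
      rw [hWs s]
      by_cases hs : (s:ℝ) ≤ a
      · rw [if_pos hs]
        have := hmuid s hs
        rw [this]
        exact rotAux_fst _ _ (by rw [hnorm s, hnorm 0])
      · rw [if_neg hs]
        rw [LinearIsometryEquiv.trans_apply]
        have hcs : c s = c₂ (ta s) := by
          rw [hc₂_def]
          simp only [Function.comp_apply, hsgta s (le_of_not_ge hs)]
        rw [hcs, hW₂e (ta s), hc₂0, hR_def]
        exact rotAux_fst _ _ (by rw [hnorm t₁, hnorm 0])
    · -- fixes Vᗮ
      intro s v hv
      rw [hWs s]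
      by_cases hs : (s:ℝ) ≤ a
      · rw [if_pos hs]
        exact rotAux_fix (hmem _) (hmem 0) hv
      · rw [if_neg hs, LinearIsometryEquiv.trans_apply, hW₂f _ v hv, hR_def]
        exact rotAux_fix (hmem _) (hmem 0) hv
    · -- det
      intro s
      rw [hWs s]
      by_cases hs : (s:ℝ) ≤ a
      · rw [if_pos hs]
        exact rotAux_det _ _ (hmune0 s) (hmune s)
      · rw [if_neg hs]
        have : ((W₂ (ta s)).trans R).toLinearMap =
            R.toLinearMap ∘ₗ (W₂ (ta s)).toLinearMap := rfl
        rw [this, LinearMap.det_comp, hW₂d, hR_def, rotAux_det _ _ ht₁ne0 ht₁ne, mul_one]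
open unitInterval in
lemma exists_fine (c : I → E) (hc : Continuous c) :
    ∃ N : ℕ, ∀ s t : I, |(s : ℝ) - (t : ℝ)| ≤ 1 / (N + 1) → ‖c s - c t‖ < 1 := by
  have huc : UniformContinuous c := CompactSpace.uniformContinuous_of_continuous hc
  rw [Metric.uniformContinuous_iff] at huc
  obtain ⟨δ, hδ0, hδ⟩ := huc 1 one_pos
  obtain ⟨N, hN⟩ := exists_nat_one_div_lt hδ0
  refine ⟨N, fun s t hst => ?_⟩
  have : dist (c s) (c t) < 1 := by
    refine hδ ?_
    rw [Subtype.dist_eq, Real.dist_eq]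
    exact lt_of_le_of_lt hst hN
  rwa [dist_eq_norm] at this
open unitInterval in
lemma stab_path (q : E) (hq : ‖q‖ = 1) (k : ℕ) :
    ∀ (F : Submodule ℝ E), finrank ℝ ↥Fᗮ ≤ k → q ∈ F →
    ∀ (A : E ≃ₗᵢ[ℝ] E), (∀ v ∈ F, A v = v) → LinearMap.det A.toLinearMap = 1 →
    ∃ D : I → (E ≃ₗᵢ[ℝ] E),
      (Continuous fun p : I × E => D p.1 p.2) ∧ D 0 = A ∧
      D 1 = LinearIsometryEquiv.refl ℝ E ∧ ∀ s, D s q = q := by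
  have hconst : ∀ (A : E ≃ₗᵢ[ℝ] E), (∀ v, A v = v) →
      ∃ D : I → (E ≃ₗᵢ[ℝ] E),
        (Continuous fun p : I × E => D p.1 p.2) ∧ D 0 = A ∧
        D 1 = LinearIsometryEquiv.refl ℝ E ∧ ∀ s, D s q = q := by
    intro A hA
    have hAr : A = LinearIsometryEquiv.refl ℝ E := LinearIsometryEquiv.ext fun v => hA v
    exact ⟨fun _ => A, A.continuous.comp continuous_snd, rfl, hAr, fun s => hA q⟩
  induction k with
  | zero =>
    intro F hrk hqF A hAF _
    have hbot : Fᗮ = ⊥ := Submodule.finrank_eq_zero.mp (Nat.le_zero.mp hrk)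
    have htop : F = ⊤ := Submodule.orthogonal_eq_bot_iff.mp hbot
    exact hconst A fun v => hAF v (htop ▸ Submodule.mem_top)
  | succ k IH =>
    intro F hrk hqF A hAF hAdet
    by_cases hbot : Fᗮ = ⊥
    · have htop : F = ⊤ := Submodule.orthogonal_eq_bot_iff.mp hbot
      exact hconst A fun v => hAF v (htop ▸ Submodule.mem_top)
    obtain ⟨w₀, hw₀F, hw₀0⟩ := Submodule.exists_mem_ne_zero_of_ne_bot hbot
    set w : E := (‖w₀‖⁻¹ : ℝ) • w₀ with hw_def
    have hw1 : ‖w‖ = 1 := norm_smul_inv_norm hw₀0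
    have hw0 : w ≠ 0 := fun h => by simp [h] at hw1
    have hwF : w ∈ Fᗮ := Submodule.smul_mem _ _ hw₀F
    set u : E := A w with hu_def
    have hu1 : ‖u‖ = 1 := by rw [hu_def, A.norm_map, hw1]
    have huF : u ∈ Fᗮ := by
      rw [Submodule.mem_orthogonal]
      intro v hv
      have h1 : ⟪A v, A w⟫ = ⟪v, w⟫ := A.inner_map_map v w
      rw [hAF v hv] at h1
      rw [hu_def, h1]
      exact (Submodule.mem_orthogonal _ _).mp hwF v hv
    -- decomposition of E
    have hdecomp : ∀ v : E, ∃ x ∈ F, ∃ y ∈ Fᗮ, v = x + y := by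
      intro v
      have : v ∈ F ⊔ Fᗮ := by
        rw [Submodule.sup_orthogonal_of_hasOrthogonalProjection]
        exact Submodule.mem_top
      obtain ⟨x, hx, y, hy, hxy⟩ := Submodule.mem_sup.mp this
      exact ⟨x, hx, y, hy, hxy.symm⟩
    by_cases hdim : finrank ℝ ↥Fᗮ = 1
    · -- one-dimensional orthogonal complement : A w = ± w
      have hspan : (ℝ ∙ w) = Fᗮ := by
        apply Submodule.eq_of_le_of_finrank_le ((span_singleton_le_iff_mem _ _).2 hwF)
        rw [hdim, finrank_span_singleton hw0]
      have hu_mem : u ∈ ℝ ∙ w := by rw [hspan]; exact huF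
      obtain ⟨r, hr⟩ := Submodule.mem_span_singleton.mp hu_mem
      have hr1 : |r| = 1 := by
        have : ‖u‖ = |r| * ‖w‖ := by rw [← hr, norm_smul, Real.norm_eq_abs]
        rw [hu1, hw1, mul_one] at this
        exact this.symm
      rcases (abs_eq (by norm_num : (0:ℝ) ≤ 1)).mp hr1 with hr1 | hr1
      · -- A w = w : A = id
        refine hconst A ?_
        intro v
        obtain ⟨x, hx, y, hy, rfl⟩ := hdecomp v
        have hy' : y ∈ ℝ ∙ w := by rw [hspan]; exact hy
        obtain ⟨c, rfl⟩ := Submodule.mem_span_singleton.mp hy'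
        rw [map_add, hAF x hx, map_smul]
        have : A w = w := by rw [← hu_def, ← hr, hr1, one_smul]
        rw [this]
      · -- A w = -w : contradiction with determinant
        exfalso
        have hAw : A w = -w := by rw [← hu_def, ← hr, hr1]; module
        have hArefl : A = reflection F := by
          apply LinearIsometryEquiv.ext
          intro v
          obtain ⟨x, hx, y, hy, rfl⟩ := hdecomp v
          have hy' : y ∈ ℝ ∙ w := by rw [hspan]; exact hy
          obtain ⟨c, rfl⟩ := Submodule.mem_span_singleton.mp hy'
          rw [map_add, map_smul, hAF x hx, hAw, map_add, map_smul,
            reflection_mem_subspace_eq_self hx,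
            reflection_mem_subspace_orthogonalComplement_eq_neg hwF]
        rw [hArefl, det_reflection, hdim] at hAdet
        norm_num at hAdet
    · -- dim Fᗮ ≥ 2 : get a path from w to u in the unit sphere of Fᗮ
      have hdim2 : 2 ≤ finrank ℝ ↥Fᗮ := by
        rcases Nat.lt_or_ge (finrank ℝ ↥Fᗮ) 2 with h | h
        · interval_cases h' : finrank ℝ ↥Fᗮ
          · exact absurd (Submodule.finrank_eq_zero.mp h') hbot
          · exact absurd rfl hdim
        · exact h
      have hrank : (1 : Cardinal) < Module.rank ℝ ↥Fᗮ := by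
        rw [← finrank_eq_rank]
        exact_mod_cast Nat.lt_of_lt_of_le Nat.one_lt_two hdim2
      have hwS : (⟨w, hwF⟩ : ↥Fᗮ) ∈ sphere (0 : ↥Fᗮ) 1 := by
        rw [mem_sphere_zero_iff_norm]
        exact hw1
      have huS : (⟨u, huF⟩ : ↥Fᗮ) ∈ sphere (0 : ↥Fᗮ) 1 := by
        rw [mem_sphere_zero_iff_norm]
        exact hu1
      obtain ⟨γ, hγ⟩ := (isPathConnected_sphere hrank (0 : ↥Fᗮ) zero_le_one).joinedIn
        _ hwS _ huS
      set c : I → E := fun s => ((γ s : ↥Fᗮ) : E) with hc_def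
      have hc : Continuous c := continuous_subtype_val.comp γ.continuous
      have hcmem : ∀ s, c s ∈ Fᗮ := fun s => (γ s).2
      have hcnorm : ∀ s, ‖c s‖ = 1 := by
        intro s
        have := mem_sphere_zero_iff_norm.mp (hγ s)
        rwa [Submodule.coe_norm] at this
      have hc0 : c 0 = w := by rw [hc_def]; simp [γ.source]
      have hc1 : c 1 = u := by rw [hc_def]; simp [γ.target]
      obtain ⟨N, hfine⟩ := exists_fine c hc
      obtain ⟨W, hWc, hW0, hWe, hWf, hWd⟩ := transport Fᗮ N c hc hcmem hcnorm hfine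
      have hWF : ∀ (s : I), ∀ v ∈ F, W s v = v := by
        intro s v hv
        refine hWf s v ?_
        rw [Submodule.orthogonal_orthogonal]
        exact hv
      set A₁ : E ≃ₗᵢ[ℝ] E := A.trans (W 1) with hA₁_def
      have hA₁w : A₁ w = w := by
        rw [hA₁_def]
        have : W 1 (c 1) = c 0 := hWe 1
        rw [hc0, hc1] at this
        simpa [LinearIsometryEquiv.trans_apply, ← hu_def] using this
      have hA₁F : ∀ v ∈ F, A₁ v = v := by
        intro v hv
        rw [hA₁_def]
        simp only [LinearIsometryEquiv.trans_apply]
        rw [hAF v hv, hWF 1 v hv]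
      set F' : Submodule ℝ E := F ⊔ (ℝ ∙ w) with hF'_def
      have hqF' : q ∈ F' := Submodule.mem_sup_left hqF
      have hA₁F' : ∀ v ∈ F', A₁ v = v := by
        intro v hv
        obtain ⟨x, hx, y, hy, rfl⟩ := Submodule.mem_sup.mp hv
        obtain ⟨c', rfl⟩ := Submodule.mem_span_singleton.mp hy
        rw [map_add, map_smul, hA₁F x hx, hA₁w]
      have hA₁det : LinearMap.det A₁.toLinearMap = 1 := by
        have : A₁.toLinearMap = (W 1).toLinearMap ∘ₗ A.toLinearMap := rfl
        rw [this, LinearMap.det_comp, hWd 1, hAdet, mul_one]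
      have hlt : F' ᗮ < Fᗮ := by
        refine lt_of_le_of_ne (Submodule.orthogonal_le le_sup_left) ?_
        intro heq
        have hwmem : w ∈ F'ᗮ := by
          rw [heq]
          exact hwF
        have : ⟪w, w⟫ = 0 :=
          (Submodule.mem_orthogonal _ _).mp hwmem w
            (Submodule.mem_sup_right (Submodule.mem_span_singleton_self w))
        rw [real_inner_self_eq_norm_sq, hw1] at this
        norm_num at this
      have hrk' : finrank ℝ ↥F'ᗮ ≤ k := by
        have := Submodule.finrank_lt_finrank_of_lt hlt
        omega
      obtain ⟨D₁, hD₁c, hD₁0, hD₁1, hD₁q⟩ := IH F' hrk' hqF' A₁ hA₁F' hA₁det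
      -- assemble
      let d₁ : I → I := fun s => ⟨min (2 * (s:ℝ)) 1, by
        constructor
        · exact le_min (by nlinarith [s.2.1]) zero_le_one
        · exact min_le_right _ _⟩
      let d₂ : I → I := fun s => ⟨max (2 * (s:ℝ) - 1) 0, by
        constructor
        · exact le_max_right _ _
        · refine max_le ?_ zero_le_one
          nlinarith [s.2.2]⟩
      have hd₁ : Continuous d₁ := Continuous.subtype_mk
        ((continuous_const.mul continuous_subtype_val).min continuous_const) _
      have hd₂ : Continuous d₂ := Continuous.subtype_mk
        (((continuous_const.mul continuous_subtype_val).sub continuous_const).max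
          continuous_const) _
      set D : I → (E ≃ₗᵢ[ℝ] E) :=
        fun s => if (s:ℝ) ≤ 1/2 then A.trans (W (d₁ s)) else D₁ (d₂ s) with hD_def
      have hDs : ∀ s : I, D s = if (s:ℝ) ≤ 1/2 then A.trans (W (d₁ s)) else D₁ (d₂ s) :=
        fun _ => rfl
      refine ⟨D, ?_, ?_, ?_, ?_⟩
      · have key : (fun p : I × E => D p.1 p.2) = fun p : I × E =>
            if (p.1 : ℝ) ≤ 1/2 then W (d₁ p.1) (A p.2) else D₁ (d₂ p.1) p.2 := by
          funext p
          rw [hDs p.1, apply_ite (fun e : E ≃ₗᵢ[ℝ] E => e p.2)]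
          rfl
        rw [key]
        refine Continuous.if_le ?_ ?_ (continuous_subtype_val.comp continuous_fst)
          continuous_const ?_
        · exact hWc.comp ((hd₁.comp continuous_fst).prodMk (A.continuous.comp continuous_snd))
        · exact hD₁c.comp ((hd₂.comp continuous_fst).prodMk continuous_snd)
        · intro p hp
          have h1 : d₁ p.1 = 1 := by
            apply Subtype.ext
            show min (2 * (p.1:ℝ)) 1 = ((1:I):ℝ)
            rw [hp]
            norm_num
          have h2 : d₂ p.1 = 0 := by
            apply Subtype.ext
            show max (2 * (p.1:ℝ) - 1) 0 = ((0:I):ℝ)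
            rw [hp]
            norm_num
          rw [h1, h2, hD₁0, hA₁_def]
          rfl
      · have h0 : ((0:I):ℝ) ≤ 1/2 := by rw [Set.Icc.coe_zero]; norm_num
        rw [hDs 0, if_pos h0]
        have hd₁0 : d₁ 0 = 0 := by
          apply Subtype.ext
          show min (2 * ((0:I):ℝ)) 1 = ((0:I):ℝ)
          rw [Set.Icc.coe_zero]
          norm_num
        rw [hd₁0, hW0]
        exact LinearIsometryEquiv.trans_refl A
      · have h1 : ¬ ((1:I):ℝ) ≤ 1/2 := by rw [Set.Icc.coe_one]; norm_num
        rw [hDs 1, if_neg h1]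
        have hd₂1 : d₂ 1 = 1 := by
          apply Subtype.ext
          show max (2 * ((1:I):ℝ) - 1) 0 = ((1:I):ℝ)
          rw [Set.Icc.coe_one]
          norm_num
        rw [hd₂1, hD₁1]
      · intro s
        rw [hDs s]
        by_cases hs : (s:ℝ) ≤ 1/2
        · rw [if_pos hs]
          show W (d₁ s) (A q) = q
          rw [hAF q hqF, hWF _ q hqF]
        · rw [if_neg hs]
          exact hD₁q (d₂ s)
end

open unitInterval in
/-- If two continuous self-maps `f, g` of the `n`-sphere send a fixed basepoint `p` to a fixed
point `q` and have the same degree (where the degree is the integer classifying the homotopy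
class of a self-map of the sphere, i.e. two self-maps are homotopic iff they have the same
degree), then `f` and `g` are homotopic through maps sending `p` to `q`. -/
theorem homotopic_rel_basepoint_of_deg_eq {n : ℕ}
    -- `deg` is the degree: the integer classifying the homotopy class of a self-map of `Sⁿ`
    (deg : C(sphere (0 : EuclideanSpace ℝ (Fin (n + 1))) 1,
      sphere (0 : EuclideanSpace ℝ (Fin (n + 1))) 1) → ℤ)
    (hdeg : ∀ f g : C(sphere (0 : EuclideanSpace ℝ (Fin (n + 1))) 1,
      sphere (0 : EuclideanSpace ℝ (Fin (n + 1))) 1), f.Homotopic g ↔ deg f = deg g)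
    (f g : C(sphere (0 : EuclideanSpace ℝ (Fin (n + 1))) 1,
      sphere (0 : EuclideanSpace ℝ (Fin (n + 1))) 1))
    (p q : sphere (0 : EuclideanSpace ℝ (Fin (n + 1))) 1)
    (hf : f p = q) (hg : g p = q) (h : deg f = deg g) :
    ∃ H : f.Homotopy g, ∀ t : unitInterval, H (t, p) = q := by
  classical
  obtain ⟨H⟩ := (hdeg f g).mpr h
  let c : I → EuclideanSpace ℝ (Fin (n + 1)) := fun t => (H (t, p) : EuclideanSpace ℝ (Fin (n+1)))
  have hc : Continuous c := continuous_subtype_val.comp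
    (H.continuous.comp (continuous_id.prodMk continuous_const))
  have hcnorm : ∀ t, ‖c t‖ = 1 := fun t => mem_sphere_zero_iff_norm.mp (H (t, p)).2
  have hc0 : c 0 = (q : EuclideanSpace ℝ (Fin (n+1))) := by
    show ((H (0, p) : _) : EuclideanSpace ℝ (Fin (n+1))) = _
    rw [H.apply_zero, hf]
  have hc1 : c 1 = (q : EuclideanSpace ℝ (Fin (n+1))) := by
    show ((H (1, p) : _) : EuclideanSpace ℝ (Fin (n+1))) = _
    rw [H.apply_one, hg]
  obtain ⟨N, hfine⟩ := exists_fine c hc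
  obtain ⟨W, hWc, hW0, hWe, -, hWd⟩ :=
    transport (⊤ : Submodule ℝ (EuclideanSpace ℝ (Fin (n+1)))) N c hc
      (fun _ => Submodule.mem_top) hcnorm hfine
  have hAq : W 1 (q : EuclideanSpace ℝ (Fin (n+1))) = (q : EuclideanSpace ℝ (Fin (n+1))) := by
    have := hWe 1
    rwa [hc1, hc0] at this
  have hq1 : ‖(q : EuclideanSpace ℝ (Fin (n+1)))‖ = 1 := mem_sphere_zero_iff_norm.mp q.2
  have hAfix : ∀ v ∈ (ℝ ∙ (q : EuclideanSpace ℝ (Fin (n+1)))), W 1 v = v := by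
    intro v hv
    obtain ⟨r, rfl⟩ := Submodule.mem_span_singleton.mp hv
    rw [map_smul, hAq]
  obtain ⟨D, hDc, hD0, hD1, hDq⟩ := stab_path (q : EuclideanSpace ℝ (Fin (n+1))) hq1
    (Module.finrank ℝ ↥(ℝ ∙ (q : EuclideanSpace ℝ (Fin (n+1))))ᗮ)
    (ℝ ∙ (q : EuclideanSpace ℝ (Fin (n+1)))) le_rfl (Submodule.mem_span_singleton_self _)
    (W 1) hAfix (hWd 1)
  have hsph : ∀ (e : EuclideanSpace ℝ (Fin (n+1)) ≃ₗᵢ[ℝ] EuclideanSpace ℝ (Fin (n+1)))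
      (x : sphere (0 : EuclideanSpace ℝ (Fin (n + 1))) 1),
      e (x : EuclideanSpace ℝ (Fin (n+1))) ∈ sphere (0 : EuclideanSpace ℝ (Fin (n + 1))) 1 := by
    intro e x
    rw [mem_sphere_zero_iff_norm, e.norm_map]
    exact mem_sphere_zero_iff_norm.mp x.2
  let mid : C(sphere (0 : EuclideanSpace ℝ (Fin (n + 1))) 1,
      sphere (0 : EuclideanSpace ℝ (Fin (n + 1))) 1) :=
    ⟨fun x => ⟨W 1 (g x : EuclideanSpace ℝ (Fin (n+1))), hsph _ _⟩,
      Continuous.subtype_mk ((W 1).continuous.comp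
        (continuous_subtype_val.comp g.continuous)) _⟩
  let K₁ : f.Homotopy mid :=
    { toFun := fun pt => ⟨W pt.1 (H pt : EuclideanSpace ℝ (Fin (n+1))), hsph _ _⟩
      continuous_toFun := Continuous.subtype_mk
        (hWc.comp (continuous_fst.prodMk (continuous_subtype_val.comp H.continuous))) _
      map_zero_left := by
        intro x
        apply Subtype.ext
        show W 0 ((H (0, x) : _) : EuclideanSpace ℝ (Fin (n+1))) = _
        rw [hW0, H.apply_zero]
        rfl
      map_one_left := by
        intro x
        apply Subtype.ext
        show W 1 ((H (1, x) : _) : EuclideanSpace ℝ (Fin (n+1))) = _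
        rw [H.apply_one]
        rfl }
  let K₂ : mid.Homotopy g :=
    { toFun := fun pt => ⟨D pt.1 (g pt.2 : EuclideanSpace ℝ (Fin (n+1))), hsph _ _⟩
      continuous_toFun := Continuous.subtype_mk
        (hDc.comp (continuous_fst.prodMk (continuous_subtype_val.comp
          (g.continuous.comp continuous_snd)))) _
      map_zero_left := by
        intro x
        apply Subtype.ext
        show D 0 ((g x : _) : EuclideanSpace ℝ (Fin (n+1))) = _
        rw [hD0]
        rfl
      map_one_left := by
        intro x
        apply Subtype.ext
        show D 1 ((g x : _) : EuclideanSpace ℝ (Fin (n+1))) = _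
        rw [hD1]
        rfl }
  refine ⟨K₁.trans K₂, ?_⟩
  intro t
  rw [ContinuousMap.Homotopy.trans_apply]
  split_ifs with ht
  · apply Subtype.ext
    show W _ ((H (_, p) : _) : EuclideanSpace ℝ (Fin (n+1))) = (q : EuclideanSpace ℝ (Fin (n+1)))
    have := hWe ⟨2 * (t:ℝ), ⟨by linarith [t.2.1], by linarith⟩⟩
    rw [hc0] at this
    exact this
  · apply Subtype.ext
    show D _ ((g p : _) : EuclideanSpace ℝ (Fin (n+1))) = (q : EuclideanSpace ℝ (Fin (n+1)))
    rw [hg]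
    exact hDq _
end
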